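/- Let d ≥ 1, let X and X' be aperiodic minimal subshifts over nonempty finite alphabets, and let h : SX → SX' be a homeomorphism that maps the canonical transversal onto the canonical transversal, i.e. h(ι(X)) = ι'(X'). Let c be the cocycle of h. Then there exists M > 0 such that for every ω ∈ X and every n ∈ ℤ^d, ‖c(ι(ω), n)‖ ≤ M·‖n‖. -/

import Mathlib

open Filter Topology

abbrev Zd (d : ℕ) := Fin d → ℤ
abbrev Rd (d : ℕ) := EuclideanSpace ℝ (Fin d)

def toRd {d : ℕ} (n : Zd d) : Rd d := WithLp.toLp 2 (fun i => (n i : ℝ))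

def shift {d : ℕ} {A : Type*} (n : Zd d) (ω : Zd d → A) : Zd d → A := fun k => ω (k - n)

structure IsSubshift {d : ℕ} {A : Type*} [TopologicalSpace A] (X : Set (Zd d → A)) : Prop where
  nonempty : X.Nonempty
  closed : IsClosed X
  shift_mem : ∀ n : Zd d, ∀ ω ∈ X, shift n ω ∈ X

def IsMinimal {d : ℕ} {A : Type*} [TopologicalSpace A] (X : Set (Zd d → A)) : Prop :=
  ∀ ω ∈ X, X ⊆ closure {ω' | ∃ n : Zd d, ω' = shift n ω}

def IsAperiodic {d : ℕ} {A : Type*} (X : Set (Zd d → A)) : Prop :=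
  ∀ ω ∈ X, ∀ n : Zd d, shift n ω = ω → n = 0

def suspRel {d : ℕ} {A : Type*} [TopologicalSpace A] (X : Set (Zd d → A)) :
    X × Rd d → X × Rd d → Prop :=
  fun p q => ∃ n : Zd d, (q.1 : Zd d → A) = shift n (p.1 : Zd d → A) ∧ q.2 = p.2 - toRd n

abbrev Susp {d : ℕ} {A : Type*} [TopologicalSpace A] (X : Set (Zd d → A)) :=
  Quot (suspRel X)

instance {d : ℕ} {A : Type*} [TopologicalSpace A] (X : Set (Zd d → A)) :
    VAdd (Rd d) (Susp X) where
  vadd t := Quot.lift (fun p => Quot.mk (suspRel X) (p.1, p.2 + t))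
    (fun p q hpq => by
      obtain ⟨n, h1, h2⟩ := hpq
      exact Quot.sound ⟨n, h1, by rw [h2, sub_add_eq_add_sub]⟩)

def iota {d : ℕ} {A : Type*} [TopologicalSpace A] (X : Set (Zd d → A)) : X → Susp X :=
  fun ω => Quot.mk _ (ω, 0)

def box (d : ℕ) (n : ℕ) : Set (Zd d) := {k | ∀ i, |k i| ≤ (n : ℤ)}

noncomputable def complexity {d : ℕ} {A : Type*} (X : Set (Zd d → A)) (n : ℕ) : ℕ :=
  Set.ncard ((fun ω => (fun k : box d n => ω k.1)) '' X)

noncomputable def repetitivity {d : ℕ} {A : Type*} (X : Set (Zd d → A)) (n : ℕ) : ℝ :=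
  sInf {C : ℝ | 0 ≤ C ∧ ∀ ω ∈ X, ∀ ω₀ ∈ X, ∃ k : Zd d,
    ‖toRd k‖ ≤ C ∧ ∀ j ∈ box d n, shift k ω j = ω₀ j}

def IsCocycleFor {d : ℕ} {A A' : Type*} [TopologicalSpace A] [TopologicalSpace A']
    {X : Set (Zd d → A)} {X' : Set (Zd d → A')}
    (h : Susp X ≃ₜ Susp X') (c : Susp X × Rd d → Rd d) : Prop :=
  ∀ (T : Susp X) (x : Rd d), h (x +ᵥ T) = c (T, x) +ᵥ h T


section Aux

variable {d : ℕ} {A : Type*} [TopologicalSpace A] {X : Set (Zd d → A)}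

lemma shift_zero' {A : Type*} (ω : Zd d → A) : shift 0 ω = ω := by
  funext k; simp [shift]

lemma shift_shift' {A : Type*} (m n : Zd d) (ω : Zd d → A) :
    shift m (shift n ω) = shift (m + n) ω := by
  funext k; simp only [shift]; congr 1; abel

lemma toRd_zero' : toRd (0 : Zd d) = 0 := by ext i; simp [toRd]
lemma toRd_add' (m n : Zd d) : toRd (m + n) = toRd m + toRd n := by ext i; simp [toRd]
lemma toRd_neg' (n : Zd d) : toRd (-n) = -toRd n := by ext i; simp [toRd]

lemma suspRel_equivalence (hX : IsSubshift X) : Equivalence (suspRel X) := by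
  constructor
  · intro p
    exact ⟨0, by rw [shift_zero'], by rw [toRd_zero', sub_zero]⟩
  · rintro p q ⟨n, h1, h2⟩
    refine ⟨-n, ?_, ?_⟩
    · rw [h1, shift_shift']; simp [shift_zero']
    · rw [h2, toRd_neg']; abel
  · rintro p q r ⟨n, h1, h2⟩ ⟨m, h3, h4⟩
    refine ⟨m + n, ?_, ?_⟩
    · rw [h3, h1, shift_shift']
    · rw [h4, h2, toRd_add']; abel

lemma susp_exact (hX : IsSubshift X) {p q : X × Rd d}
    (H : Quot.mk (suspRel X) p = Quot.mk (suspRel X) q) : suspRel X p q :=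
  ((suspRel_equivalence hX).eqvGen_iff).1 (Quot.eqvGen_exact H)

lemma vadd_mk (t : Rd d) (ω : X) (x : Rd d) :
    t +ᵥ (Quot.mk (suspRel X) (ω, x)) = Quot.mk (suspRel X) (ω, x + t) := rfl

lemma susp_free (hX : IsSubshift X) (hXap : IsAperiodic X) (S : Susp X) (a b : Rd d)
    (hab : a +ᵥ S = b +ᵥ S) : a = b := by
  obtain ⟨⟨ω, x⟩, rfl⟩ := Quot.exists_rep S
  rw [vadd_mk, vadd_mk] at hab
  obtain ⟨n, h1, h2⟩ := susp_exact hX hab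
  have hn : n = 0 := hXap ω.1 ω.2 n h1.symm
  subst hn
  rw [toRd_zero', sub_zero] at h2
  exact add_left_cancel h2.symm

end Aux
lemma abs_le_norm_toRd {d : ℕ} (x : Rd d) (i : Fin d) : |x i| ≤ ‖x‖ := by
  rw [EuclideanSpace.norm_eq]
  have h1 : |x i| = Real.sqrt (‖x i‖^2) := by
    rw [Real.sqrt_sq_eq_abs]; simp
  rw [h1]
  apply Real.sqrt_le_sqrt
  exact Finset.single_le_sum (f := fun j => ‖x j‖^2) (fun j _ => by positivity) (Finset.mem_univ i)

lemma toRd_eq_zero_of_norm_lt_one {d : ℕ} {n : Zd d} (h : ‖toRd n‖ < 1) : n = 0 := by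
  funext i
  have := abs_le_norm_toRd (toRd n) i
  have h2 : |(n i : ℝ)| < 1 := lt_of_le_of_lt (by simpa [toRd] using this) h
  have h3 : ((|n i| : ℤ) : ℝ) < 1 := by rw [Int.cast_abs]; exact h2
  have h4 : |n i| < 1 := by exact_mod_cast h3
  rwa [Int.abs_lt_one_iff] at h4

lemma one_le_norm_toRd {d : ℕ} {n : Zd d} (h : n ≠ 0) : 1 ≤ ‖toRd n‖ := by
  by_contra hlt
  exact h (toRd_eq_zero_of_norm_lt_one (not_le.1 hlt))

section Aux2

variable {d : ℕ} {A : Type*} [TopologicalSpace A] {X : Set (Zd d → A)}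

lemma continuous_shift (n : Zd d) : Continuous (shift n : (Zd d → A) → (Zd d → A)) :=
  continuous_pi fun k => continuous_apply (k - n)

lemma isOpen_mk_image (hX : IsSubshift X) (C : Set X) (hC : IsOpen C)
    (U : Set (Rd d)) (hU : IsOpen U) :
    IsOpen (Quot.mk (suspRel X) '' {p : X × Rd d | p.1 ∈ C ∧ p.2 ∈ U}) := by
  rw [isOpen_coinduced]
  have hset : Quot.mk (suspRel X) ⁻¹' (Quot.mk (suspRel X) '' {p : X × Rd d | p.1 ∈ C ∧ p.2 ∈ U})
      = ⋃ n : Zd d, (fun p : X × Rd d =>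
          ((⟨shift n p.1.1, hX.shift_mem n p.1.1 p.1.2⟩ : X), p.2 - toRd n)) ⁻¹'
          {p : X × Rd d | p.1 ∈ C ∧ p.2 ∈ U} := by
    ext p
    simp only [Set.mem_preimage, Set.mem_image, Set.mem_iUnion, Set.mem_setOf_eq]
    constructor
    · rintro ⟨q, ⟨hq1, hq2⟩, hq3⟩
      obtain ⟨n, h1, h2⟩ := susp_exact hX hq3.symm
      refine ⟨n, ?_, ?_⟩
      · have : (⟨shift n p.1.1, hX.shift_mem n p.1.1 p.1.2⟩ : X) = q.1 := by
          apply Subtype.ext; exact h1.symm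
        rwa [this]
      · rw [← h2]; exact hq2
    · rintro ⟨n, h1, h2⟩
      refine ⟨((⟨shift n p.1.1, hX.shift_mem n p.1.1 p.1.2⟩ : X), p.2 - toRd n), ⟨h1, h2⟩, ?_⟩
      exact (Quot.sound ⟨n, rfl, rfl⟩).symm
  rw [hset]
  apply isOpen_iUnion
  intro n
  apply (IsOpen.preimage ?_ (hC.prod hU))
  apply Continuous.prodMk
  · apply Continuous.subtype_mk
    exact (continuous_shift n).comp (continuous_subtype_val.comp continuous_fst)
  · exact continuous_snd.sub continuous_const

lemma chart_unique (hX : IsSubshift X) {ψ ψ' : X} {z z' z₀ : Rd d}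
    (hz : ‖z - z₀‖ < 1/2) (hz' : ‖z' - z₀‖ < 1/2)
    (H : Quot.mk (suspRel X) (ψ, z) = Quot.mk (suspRel X) (ψ', z')) : ψ = ψ' ∧ z = z' := by
  obtain ⟨n, h1, h2⟩ := susp_exact hX H
  simp only at h1 h2
  have hn : ‖toRd n‖ < 1 := by
    have heq : toRd n = z - z' := by rw [h2]; abel
    rw [heq]
    have t1 : ‖z - z'‖ ≤ ‖z - z₀‖ + ‖z₀ - z'‖ := by
      have := norm_add_le (z - z₀) (z₀ - z'); simpa using this
    have t2 : ‖z₀ - z'‖ = ‖z' - z₀‖ := by rw [← norm_neg]; simp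
    linarith
  have hn0 : n = 0 := toRd_eq_zero_of_norm_lt_one hn
  subst hn0
  rw [shift_zero'] at h1
  rw [toRd_zero', sub_zero] at h2
  exact ⟨Subtype.ext h1.symm, h2.symm⟩

end Aux2

section Aux3

variable {d : ℕ} {A : Type*} [TopologicalSpace A] [DiscreteTopology A] {X : Set (Zd d → A)}

lemma chart_path (hX : IsSubshift X) {γ : ℝ → Susp X} (hγ : Continuous γ) {z₀ : Rd d}
    (hin : ∀ t ∈ Set.Icc (0:ℝ) 1, ∃ p : X × Rd d,
      γ t = Quot.mk (suspRel X) p ∧ ‖p.2 - z₀‖ < 1/4) :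
    ∃ w : Rd d, ‖w‖ < 1 ∧ γ 1 = w +ᵥ γ 0 := by
  obtain ⟨⟨ψ₀, ζ₀⟩, hp0, hb0⟩ := hin 0 (by norm_num)
  obtain ⟨⟨ψ₁, ζ₁⟩, hp1, hb1⟩ := hin 1 (by norm_num)
  simp only at hb0 hb1
  have hpsi : ψ₀ = ψ₁ := by
    by_contra hne
    have hex : ∃ k, ψ₀.1 k ≠ ψ₁.1 k := by
      by_contra hh; push_neg at hh; exact hne (Subtype.ext (funext hh))
    obtain ⟨k, hk⟩ := hex
    set u := Quot.mk (suspRel X) ''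
      {p : X × Rd d | p.1 ∈ {ψ : X | ψ.1 k = ψ₀.1 k} ∧ p.2 ∈ Metric.ball z₀ (1/2)} with hu_def
    set v := Quot.mk (suspRel X) ''
      {p : X × Rd d | p.1 ∈ {ψ : X | ψ.1 k ≠ ψ₀.1 k} ∧ p.2 ∈ Metric.ball z₀ (1/2)} with hv_def
    have hCopen : IsOpen {ψ : X | ψ.1 k = ψ₀.1 k} := by
      have : Continuous (fun ψ : X => ψ.1 k) :=
        (continuous_apply k).comp continuous_subtype_val
      exact (isOpen_discrete {ψ₀.1 k}).preimage this
    have hCopen' : IsOpen {ψ : X | ψ.1 k ≠ ψ₀.1 k} := by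
      have : Continuous (fun ψ : X => ψ.1 k) :=
        (continuous_apply k).comp continuous_subtype_val
      exact (isOpen_discrete {a : A | a ≠ ψ₀.1 k}).preimage this
    have hu : IsOpen u := isOpen_mk_image hX _ hCopen _ Metric.isOpen_ball
    have hv : IsOpen v := isOpen_mk_image hX _ hCopen' _ Metric.isOpen_ball
    have hcov : Set.Icc (0:ℝ) 1 ⊆ γ ⁻¹' u ∪ γ ⁻¹' v := by
      intro t ht
      obtain ⟨p, hp, hb⟩ := hin t ht
      have hball : p.2 ∈ Metric.ball z₀ (1/2) := by
        rw [Metric.mem_ball, dist_eq_norm]; linarith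
      by_cases hc : p.1.1 k = ψ₀.1 k
      · exact Or.inl ⟨p, ⟨hc, hball⟩, hp.symm⟩
      · exact Or.inr ⟨p, ⟨hc, hball⟩, hp.symm⟩
    have h0u : (0:ℝ) ∈ Set.Icc (0:ℝ) 1 ∩ γ ⁻¹' u := by
      refine ⟨by norm_num, ⟨(ψ₀, ζ₀), ⟨rfl, ?_⟩, hp0.symm⟩⟩
      rw [Metric.mem_ball, dist_eq_norm]; linarith
    have h1v : (1:ℝ) ∈ Set.Icc (0:ℝ) 1 ∩ γ ⁻¹' v := by
      refine ⟨by norm_num, ⟨(ψ₁, ζ₁), ⟨fun hh => hk hh.symm, ?_⟩, hp1.symm⟩⟩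
      rw [Metric.mem_ball, dist_eq_norm]; linarith
    obtain ⟨t, _, htu, htv⟩ := isPreconnected_Icc (γ ⁻¹' u) (γ ⁻¹' v)
      (hu.preimage hγ) (hv.preimage hγ) hcov ⟨0, h0u⟩ ⟨1, h1v⟩
    obtain ⟨pa, ⟨hpa1, hpa2⟩, hpa3⟩ := htu
    obtain ⟨pb, ⟨hpb1, hpb2⟩, hpb3⟩ := htv
    rw [Metric.mem_ball, dist_eq_norm] at hpa2 hpb2
    have heq : Quot.mk (suspRel X) (pa.1, pa.2) = Quot.mk (suspRel X) (pb.1, pb.2) := by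
      rw [Prod.mk.eta, Prod.mk.eta, hpa3, hpb3]
    obtain ⟨hψeq, _⟩ := chart_unique hX hpa2 hpb2 heq
    exact hpb1 (by rw [← hψeq]; exact hpa1)
  refine ⟨ζ₁ - ζ₀, ?_, ?_⟩
  · have t1 : ‖ζ₁ - ζ₀‖ ≤ ‖ζ₁ - z₀‖ + ‖z₀ - ζ₀‖ := by
      have := norm_add_le (ζ₁ - z₀) (z₀ - ζ₀); simpa using this
    have t2 : ‖z₀ - ζ₀‖ = ‖ζ₀ - z₀‖ := by rw [← norm_neg]; simp
    linarith
  · rw [hp1, hp0, vadd_mk, ← hpsi]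
    congr 1
    rw [Prod.mk.injEq]
    exact ⟨rfl, by abel⟩

end Aux3

section Aux4

variable {d : ℕ} {A : Type*} [TopologicalSpace A] {X : Set (Zd d → A)}

lemma zero_vadd' (S : Susp X) : (0 : Rd d) +ᵥ S = S := by
  obtain ⟨⟨ω, x⟩, rfl⟩ := Quot.exists_rep S
  rw [vadd_mk, add_zero]

lemma vadd_vadd' (a b : Rd d) (S : Susp X) : a +ᵥ (b +ᵥ S) = (b + a) +ᵥ S := by
  obtain ⟨⟨ω, x⟩, rfl⟩ := Quot.exists_rep S
  rw [vadd_mk, vadd_mk, vadd_mk, add_assoc]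

lemma exists_round (d : ℕ) (y : Rd d) : ∃ k : Zd d, ‖y - toRd k‖ ≤ (d : ℝ) := by
  refine ⟨fun i => round (y i), ?_⟩
  rw [EuclideanSpace.norm_eq]
  have hterm : ∀ i : Fin d, ‖(y - toRd (fun i => round (y i))) i‖ ^ 2 ≤ 1 := by
    intro i
    have h1 : (y - toRd (fun i => round (y i))) i = y i - (round (y i) : ℝ) := by
      simp [toRd]
    rw [h1, Real.norm_eq_abs]
    have h2 : |y i - (round (y i) : ℝ)| ≤ 1/2 := abs_sub_round (y i)
    nlinarith [abs_nonneg (y i - (round (y i) : ℝ))]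
  have hsum : ∑ i, ‖(y - toRd (fun i => round (y i))) i‖ ^ 2 ≤ (d : ℝ) := by
    calc ∑ i, ‖(y - toRd (fun i => round (y i))) i‖ ^ 2 ≤ ∑ _i : Fin d, (1:ℝ) :=
          Finset.sum_le_sum (fun i _ => hterm i)
    _ = (d : ℝ) := by simp
  have hd2 : (d : ℝ) ≤ (d : ℝ) ^ 2 := by
    have : (d : ℕ) ≤ d ^ 2 := Nat.le_self_pow two_ne_zero d
    exact_mod_cast this
  calc Real.sqrt (∑ i, ‖(y - toRd (fun i => round (y i))) i‖ ^ 2)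
      ≤ Real.sqrt ((d : ℝ) ^ 2) := Real.sqrt_le_sqrt (by linarith)
  _ = (d : ℝ) := Real.sqrt_sq (by positivity)

end Aux4

theorem cocycle_lipschitz_on_transversal
    {d : ℕ} (hd : 1 ≤ d)
    {A A' : Type*} [Fintype A] [Nonempty A] [TopologicalSpace A] [DiscreteTopology A]
    [Fintype A'] [Nonempty A'] [TopologicalSpace A'] [DiscreteTopology A']
    (X : Set (Zd d → A)) (X' : Set (Zd d → A'))
    (hX : IsSubshift X) (hX' : IsSubshift X')
    (hXmin : IsMinimal X) (hX'min : IsMinimal X')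
    (hXap : IsAperiodic X) (hX'ap : IsAperiodic X')
    (h : Susp X ≃ₜ Susp X')
    (htrans : ⇑h '' Set.range (iota X) = Set.range (iota X'))
    (c : Susp X × Rd d → Rd d) (hc : IsCocycleFor h c) :
    ∃ M : ℝ, 0 < M ∧ ∀ (ω : X) (n : Zd d), ‖c (iota X ω, toRd n)‖ ≤ M * ‖toRd n‖ := by
  classical
  -- compactness of X
  haveI : CompactSpace (Zd d → A) := inferInstance
  have hXcomp : IsCompact X := hX.closed.isCompact
  haveI hXcs : CompactSpace X := isCompact_iff_compactSpace.mp hXcomp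
  -- the compact fundamental domain
  set K : Set (X × Rd d) := Set.univ ×ˢ Metric.closedBall (0 : Rd d) d with hK_def
  have hKcomp : IsCompact K := isCompact_univ.prod (isCompact_closedBall _ _)
  -- local charts
  have key : ∀ p : X × Rd d, ∃ (z₀ : Rd d) (U : Set (X × Rd d)) (δ : ℝ),
      IsOpen U ∧ p ∈ U ∧ 0 < δ ∧ ∀ q ∈ U, ∀ u : Rd d, ‖u‖ < δ →
        ∃ pq : X' × Rd d, h (Quot.mk (suspRel X) (q.1, q.2 + u)) = Quot.mk (suspRel X') pq ∧
          ‖pq.2 - z₀‖ < 1/4 := by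
    intro p
    obtain ⟨⟨ψ, z⟩, hrep⟩ := Quot.exists_rep (h (Quot.mk (suspRel X) p))
    set C : Set (Susp X') := Quot.mk (suspRel X') ''
      {q : X' × Rd d | q.1 ∈ (Set.univ : Set X') ∧ q.2 ∈ Metric.ball z (1/4)} with hC_def
    have hCopen : IsOpen C := isOpen_mk_image hX' _ isOpen_univ _ Metric.isOpen_ball
    set Φ : (X × Rd d) × Rd d → Susp X' :=
      fun q => h (Quot.mk (suspRel X) (q.1.1, q.1.2 + q.2)) with hΦ_def
    have hΦcont : Continuous Φ := by
      apply h.continuous.comp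
      apply continuous_quot_mk.comp
      exact (continuous_fst.fst).prodMk ((continuous_fst.snd).add continuous_snd)
    have hmem : (p, (0 : Rd d)) ∈ Φ ⁻¹' C := by
      show Φ (p, 0) ∈ C
      have : Φ (p, 0) = h (Quot.mk (suspRel X) p) := by
        simp only [hΦ_def, add_zero]
      rw [this, ← hrep]
      exact ⟨(ψ, z), ⟨Set.mem_univ _, Metric.mem_ball_self (by norm_num)⟩, rfl⟩
    have hopen : IsOpen (Φ ⁻¹' C) := hCopen.preimage hΦcont
    rw [isOpen_prod_iff] at hopen
    obtain ⟨U, V, hUo, hVo, hpU, h0V, hUV⟩ := hopen p 0 hmem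
    obtain ⟨δ, hδpos, hδball⟩ := Metric.isOpen_iff.mp hVo 0 h0V
    refine ⟨z, U, δ, hUo, hpU, hδpos, ?_⟩
    intro q hq u hu
    have huV : u ∈ V := hδball (by rw [Metric.mem_ball, dist_zero_right]; exact hu)
    have : Φ (q, u) ∈ C := hUV ⟨hq, huV⟩
    obtain ⟨pq, ⟨_, hpq2⟩, hpq3⟩ := this
    rw [Metric.mem_ball, dist_eq_norm] at hpq2
    exact ⟨pq, hpq3.symm, hpq2⟩
  choose z₀ U δ hUopen hpU hδpos hprop using key
  -- finite subcover
  have hcover : K ⊆ ⋃ p : X × Rd d, U p := fun p _ => Set.mem_iUnion.2 ⟨p, hpU p⟩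
  obtain ⟨t, ht⟩ := hKcomp.elim_finite_subcover U hUopen hcover
  obtain ⟨ω₀, hω₀⟩ := hX.nonempty
  have hKne : ((⟨ω₀, hω₀⟩ : X), (0 : Rd d)) ∈ K := by
    refine ⟨Set.mem_univ _, ?_⟩
    rw [Metric.mem_closedBall, dist_self]
    exact_mod_cast Nat.zero_le d
  have htne : t.Nonempty := by
    by_contra hte
    rw [Finset.not_nonempty_iff_eq_empty] at hte
    have := ht hKne
    simp [hte] at this
  set ε : ℝ := t.inf' htne δ with hε_def
  have hεpos : 0 < ε := by
    rw [hε_def, Finset.lt_inf'_iff]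
    exact fun p _ => hδpos p
  -- step lemma
  have step : ∀ (ω : X) (y u : Rd d), ‖u‖ < ε →
      ∃ w : Rd d, ‖w‖ < 1 ∧
        h (Quot.mk (suspRel X) (ω, y + u)) = w +ᵥ h (Quot.mk (suspRel X) (ω, y)) := by
    intro ω y u hu
    obtain ⟨k, hk⟩ := exists_round d y
    set p : X × Rd d := ((⟨shift k ω.1, hX.shift_mem k ω.1 ω.2⟩ : X), y - toRd k) with hp_def
    have hpK : p ∈ K := by
      refine ⟨Set.mem_univ _, ?_⟩
      rw [Metric.mem_closedBall, dist_eq_norm, sub_zero]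
      exact hk
    obtain ⟨p₀, hp₀t, hp₀U⟩ := Set.mem_iUnion₂.mp (ht hpK)
    have hδ₀ : ε ≤ δ p₀ := Finset.inf'_le δ hp₀t
    set γ : ℝ → Susp X' := fun s => h (Quot.mk (suspRel X) (p.1, p.2 + s • u)) with hγ_def
    have hγcont : Continuous γ := by
      apply h.continuous.comp
      apply continuous_quot_mk.comp
      exact continuous_const.prodMk (continuous_const.add (continuous_id.smul continuous_const))
    have hγin : ∀ s ∈ Set.Icc (0:ℝ) 1, ∃ pq : X' × Rd d,
        γ s = Quot.mk (suspRel X') pq ∧ ‖pq.2 - z₀ p₀‖ < 1/4 := by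
      intro s hs
      apply hprop p₀ p hp₀U (s • u)
      have : ‖s • u‖ = |s| * ‖u‖ := by rw [norm_smul, Real.norm_eq_abs]
      rw [this]
      have habs : |s| ≤ 1 := by rw [abs_le]; exact ⟨by linarith [hs.1], hs.2⟩
      calc |s| * ‖u‖ ≤ 1 * ‖u‖ := by
            apply mul_le_mul_of_nonneg_right habs (norm_nonneg u)
      _ = ‖u‖ := one_mul _
      _ < ε := hu
      _ ≤ δ p₀ := hδ₀
    obtain ⟨w, hw1, hw2⟩ := chart_path hX' hγcont hγin
    refine ⟨w, hw1, ?_⟩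
    have hrel : ∀ s : ℝ, Quot.mk (suspRel X) (p.1, p.2 + s • u)
        = Quot.mk (suspRel X) (ω, (y + s • u)) := by
      intro s
      refine (Quot.sound ⟨k, rfl, ?_⟩).symm
      show p.2 + s • u = (y + s • u) - toRd k
      rw [hp_def]
      exact sub_add_eq_add_sub y (toRd k) (s • u)
    have hγ1 : γ 1 = h (Quot.mk (suspRel X) (ω, y + u)) := by
      show h (Quot.mk (suspRel X) (p.1, p.2 + (1:ℝ) • u)) = _
      rw [hrel 1, one_smul]
    have hγ0 : γ 0 = h (Quot.mk (suspRel X) (ω, y)) := by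
      show h (Quot.mk (suspRel X) (p.1, p.2 + (0:ℝ) • u)) = _
      rw [hrel 0, zero_smul, add_zero]
    rw [← hγ1, ← hγ0]
    exact hw2
  -- conclusion
  refine ⟨2 / ε + 1, by positivity, ?_⟩
  intro ω n
  by_cases hn : n = 0
  · subst hn
    have h0 : c (iota X ω, toRd 0) = 0 := by
      have h1 := hc (iota X ω) (toRd 0)
      rw [toRd_zero'] at h1 ⊢
      rw [zero_vadd'] at h1
      have h2 : (0 : Rd d) +ᵥ h (iota X ω) = h (iota X ω) := zero_vadd' _
      exact susp_free hX' hX'ap (h (iota X ω)) _ 0 (h1.symm.trans h2.symm)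
    rw [h0, toRd_zero']
    simp
  · set x : Rd d := toRd n with hx_def
    have hx1 : (1:ℝ) ≤ ‖x‖ := one_le_norm_toRd hn
    have hxpos : (0:ℝ) < ‖x‖ := lt_of_lt_of_le one_pos hx1
    set N : ℕ := Nat.ceil (‖x‖ / (ε/2)) with hN_def
    have hNpos : 0 < N := Nat.ceil_pos.mpr (by positivity)
    have hNR : (0:ℝ) < (N:ℝ) := by exact_mod_cast hNpos
    have hstepnorm : ‖((N:ℝ))⁻¹ • x‖ < ε := by
      rw [norm_smul, Real.norm_eq_abs, abs_inv, abs_of_pos hNR]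
      have hle : ‖x‖ / (ε/2) ≤ (N:ℝ) := Nat.le_ceil _
      have : ‖x‖ / (N:ℝ) ≤ ε/2 := by
        rw [div_le_iff₀ hNR]
        calc ‖x‖ = (‖x‖ / (ε/2)) * (ε/2) := by field_simp
        _ ≤ (N:ℝ) * (ε/2) := mul_le_mul_of_nonneg_right hle (by positivity)
        _ = ε/2 * (N:ℝ) := by ring
      calc (N:ℝ)⁻¹ * ‖x‖ = ‖x‖ / (N:ℝ) := by ring
      _ ≤ ε/2 := this
      _ < ε := by linarith
    -- chain
    have chain : ∀ j : ℕ, j ≤ N → ∃ w : Rd d, ‖w‖ ≤ j ∧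
        h (Quot.mk (suspRel X) (ω, ((j:ℝ)/(N:ℝ)) • x)) = w +ᵥ h (Quot.mk (suspRel X) (ω, 0)) := by
      intro j
      induction j with
      | zero =>
        intro _
        refine ⟨0, by simp, ?_⟩
        rw [zero_vadd']
        norm_num
      | succ j ih =>
        intro hj
        obtain ⟨w, hw1, hw2⟩ := ih (le_trans (Nat.le_succ j) hj)
        obtain ⟨w', hw'1, hw'2⟩ := step ω (((j:ℝ)/(N:ℝ)) • x) (((N:ℝ))⁻¹ • x) hstepnorm
        refine ⟨w + w', ?_, ?_⟩
        · calc ‖w + w'‖ ≤ ‖w‖ + ‖w'‖ := norm_add_le _ _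
          _ ≤ (j:ℝ) + 1 := by push_cast; linarith
          _ = ((j+1 : ℕ) : ℝ) := by push_cast; ring
        · have harg : ((j:ℝ)/(N:ℝ)) • x + ((N:ℝ))⁻¹ • x = (((j+1:ℕ):ℝ)/(N:ℝ)) • x := by
            rw [← add_smul]
            congr 1
            push_cast
            field_simp
          rw [← harg, hw'2, hw2, vadd_vadd']
    obtain ⟨w, hw1, hw2⟩ := chain N le_rfl
    have hNN : ((N:ℝ)/(N:ℝ)) • x = x := by
      rw [div_self (ne_of_gt hNR), one_smul]
    rw [hNN] at hw2
    -- relate to cocycle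
    have hcoc := hc (iota X ω) x
    have hvadd : x +ᵥ iota X ω = Quot.mk (suspRel X) (ω, x) := by
      show x +ᵥ Quot.mk (suspRel X) (ω, 0) = Quot.mk (suspRel X) (ω, x)
      rw [vadd_mk, zero_add]
    have hiota : iota X ω = Quot.mk (suspRel X) (ω, 0) := rfl
    rw [hvadd, hiota] at hcoc
    have hceq : c (iota X ω, x) = w :=
      susp_free hX' hX'ap _ _ _ (hcoc.symm.trans hw2)
    rw [hceq]
    have hNb : (N:ℝ) ≤ ‖x‖/(ε/2) + 1 := le_of_lt (Nat.ceil_lt_add_one (by positivity))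
    calc ‖w‖ ≤ (N:ℝ) := hw1
    _ ≤ ‖x‖/(ε/2) + 1 := hNb
    _ ≤ ‖x‖/(ε/2) + ‖x‖ := by linarith
    _ = (2/ε + 1) * ‖x‖ := by field_simp
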